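/- arXiv:2505.07383 — 3 statements merged into one kernel-verified Lean document; each statement's English description precedes it below -/
import Mathlib

section
/- The function f(y) = Φ(y/3 + (2/3)√(y²+6 ln 2)) - Φ((2/3)y + (1/3)√(y²+6 ln 2)) is strictly decreasing on (-∞, 0), where Φ is the standard normal CDF. -/
open MeasureTheory ProbabilityTheory

/-- The standard normal cumulative distribution function. -/
noncomputable def Phi (x : ℝ) : ℝ := ((gaussianReal 0 1) (Set.Iic x)).toReal

noncomputable def phi (x : ℝ) : ℝ := gaussianPDFReal 0 1 x

lemma phi_pos (x : ℝ) : 0 < phi x := gaussianPDFReal_pos 0 1 x one_ne_zero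

lemma continuous_phi : Continuous phi := by
  unfold phi gaussianPDFReal
  fun_prop

lemma Phi_eq (x : ℝ) : Phi x = ∫ t in Set.Iic x, phi t := by
  rw [Phi, gaussianReal_apply_eq_integral 0 one_ne_zero, ENNReal.toReal_ofReal]
  · rfl
  · exact integral_nonneg fun t => gaussianPDFReal_nonneg _ _ _

lemma hasDerivAt_Phi (x : ℝ) : HasDerivAt Phi (phi x) x := by
  have hint : Integrable phi := integrable_gaussianPDFReal 0 1
  have key : Phi = fun y => (∫ t in (0:ℝ)..y, phi t) + Phi 0 := by
    funext y
    rw [Phi_eq y, ← intervalIntegral.integral_Iic_sub_Iic hint.integrableOn hint.integrableOn,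
      Phi_eq 0]
    ring
  rw [key]
  exact (intervalIntegral.integral_hasDerivAt_right (hint.intervalIntegrable)
    continuous_phi.aestronglyMeasurable.stronglyMeasurableAtFilter
    continuous_phi.continuousAt).add_const _

lemma hasDerivAt_f (y : ℝ) :
    HasDerivAt (fun y : ℝ =>
        Phi (y / 3 + (2 / 3) * Real.sqrt (y ^ 2 + 6 * Real.log 2)) -
          Phi ((2 / 3) * y + (1 / 3) * Real.sqrt (y ^ 2 + 6 * Real.log 2)))
      (-(1/2) * phi ((2 / 3) * y + (1 / 3) * Real.sqrt (y ^ 2 + 6 * Real.log 2))) y := by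
  have hc : 0 < 6 * Real.log 2 := by positivity
  set c := 6 * Real.log 2 with hcdef
  have hypos : 0 < y ^ 2 + c := by positivity
  set s := Real.sqrt (y ^ 2 + c) with hsdef
  have hspos : 0 < s := Real.sqrt_pos.mpr hypos
  have hs2 : s ^ 2 = y ^ 2 + c := Real.sq_sqrt hypos.le
  -- derivative of s
  have hds : HasDerivAt (fun y : ℝ => Real.sqrt (y ^ 2 + c)) (y / s) y := by
    have h1 : HasDerivAt (fun y : ℝ => y ^ 2 + c) (2 * y) y := by
      simpa using (hasDerivAt_pow 2 y).add_const c
    have h2 := (Real.hasDerivAt_sqrt hypos.ne').comp y h1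
    refine h2.congr_deriv ?_
    rw [← hsdef]
    field_simp
  have hA : HasDerivAt (fun y : ℝ => y / 3 + (2 / 3) * Real.sqrt (y ^ 2 + c))
      (1 / 3 + (2 / 3) * (y / s)) y := by
    have := ((hasDerivAt_id y).div_const 3).add (hds.const_mul (2/3 : ℝ))
    exact this
  have hB : HasDerivAt (fun y : ℝ => (2 / 3) * y + (1 / 3) * Real.sqrt (y ^ 2 + c))
      (2 / 3 + (1 / 3) * (y / s)) y := by
    have := ((hasDerivAt_id y).const_mul (2/3 : ℝ)).add (hds.const_mul (1/3 : ℝ))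
    exact this.congr_deriv (by ring)
  have hd := ((hasDerivAt_Phi _).comp y hA).sub ((hasDerivAt_Phi _).comp y hB)
  refine hd.congr_deriv ?_
  set A := y / 3 + (2 / 3) * s with hAdef
  set B := (2 / 3) * y + (1 / 3) * s with hBdef
  have hAB : A ^ 2 = B ^ 2 + 2 * Real.log 2 := by
    rw [hAdef, hBdef]; nlinarith [hs2]
  have hphiA : phi A = phi B / 2 := by
    unfold phi gaussianPDFReal
    push_cast
    rw [show ((A:ℝ) - 0) ^ 2 = (B - 0) ^ 2 + 2 * Real.log 2 from by simpa using hAB,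
      show -((B - 0) ^ 2 + 2 * Real.log 2) / (2 * 1) = -(B - 0) ^ 2 / (2 * 1) + -Real.log 2 from by
        ring,
      Real.exp_add, Real.exp_neg, Real.exp_log two_pos]
    ring
  rw [hphiA]
  have hsne := hspos.ne'
  field_simp
  ring

/-- The function
`f(y) = Φ(y/3 + (2/3)√(y²+6 ln 2)) - Φ((2/3)y + (1/3)√(y²+6 ln 2))`
is strictly decreasing on `(-∞, 0)`. -/
theorem f_strictAntiOn :
    StrictAntiOn
      (fun y : ℝ =>
        Phi (y / 3 + (2 / 3) * Real.sqrt (y ^ 2 + 6 * Real.log 2)) -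
          Phi ((2 / 3) * y + (1 / 3) * Real.sqrt (y ^ 2 + 6 * Real.log 2)))
      (Set.Iio (0 : ℝ)) := by
  have h : StrictAnti (fun y : ℝ =>
      Phi (y / 3 + (2 / 3) * Real.sqrt (y ^ 2 + 6 * Real.log 2)) -
        Phi ((2 / 3) * y + (1 / 3) * Real.sqrt (y ^ 2 + 6 * Real.log 2))) := by
    apply strictAnti_of_deriv_neg
    intro y
    rw [(hasDerivAt_f y).deriv]
    have := phi_pos ((2 / 3) * y + (1 / 3) * Real.sqrt (y ^ 2 + 6 * Real.log 2))
    linarith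
  exact h.strictAntiOn _
end

section
/- Under the standard p-variate normal distribution P₀ = N(0, I_p), the maximizer of the scatter depth D(Γ, P₀) over symmetric positive definite matrices Γ is the matrix [Φ⁻¹(3/4)]² · I_p, and the corresponding maximal depth value is 1/2. -/
open MeasureTheory ProbabilityTheory Matrix

/-- The standard multivariate normal distribution `N(0, I_p)` on `ℝᵖ`. -/
noncomputable def stdGaussianPi (p : ℕ) : Measure (Fin p → ℝ) :=
  Measure.pi fun _ => gaussianReal 0 1

/-- The scatter halfspace depth of a matrix `Γ` at a distribution `P` on `ℝᵖ`:
`D(Γ,P) = inf over unit vectors u of min{P(|uᵀX|² ≤ uᵀΓu), P(|uᵀX|² ≥ uᵀΓu)}`. -/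
noncomputable def scatterDepth {p : ℕ} (Γ : Matrix (Fin p) (Fin p) ℝ)
    (P : Measure (Fin p → ℝ)) : ℝ :=
  ⨅ u : {u : Fin p → ℝ // u ⬝ᵥ u = 1},
    min (P {x | (u.1 ⬝ᵥ x) ^ 2 ≤ u.1 ⬝ᵥ Γ.mulVec u.1}).toReal
        (P {x | u.1 ⬝ᵥ Γ.mulVec u.1 ≤ (u.1 ⬝ᵥ x) ^ 2}).toReal

/-- The inverse of the standard normal CDF. -/
noncomputable def PhiInv : ℝ → ℝ := Function.invFun Phi

open Real NNReal

lemma sqrt_const_eq (a b : ℝ) (ha : 0 < a) (hb : 0 < b) :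
    (√(2 * π * a))⁻¹ * (√(2 * π * b))⁻¹ * √(π / ((a + b) / (2 * a * b)))
      = (√(2 * π * (a + b)))⁻¹ := by
  have hab : 0 < a + b := by linarith
  have hpi := Real.pi_pos
  rw [← Real.sqrt_inv, ← Real.sqrt_inv, ← Real.sqrt_mul (by positivity),
    ← Real.sqrt_mul (by positivity), ← Real.sqrt_inv]
  congr 1
  field_simp

lemma pdf_conv (v₁ v₂ : ℝ≥0) (h₁ : v₁ ≠ 0) (h₂ : v₂ ≠ 0) (z : ℝ) :
    ∫ x, gaussianPDFReal 0 v₁ x * gaussianPDFReal 0 v₂ (z - x)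
      = gaussianPDFReal 0 (v₁ + v₂) z := by
  have ha : 0 < (v₁ : ℝ) := by positivity
  have hb : 0 < (v₂ : ℝ) := by positivity
  set a : ℝ := (v₁ : ℝ)
  set b : ℝ := (v₂ : ℝ)
  have hab : 0 < a + b := by linarith
  set k : ℝ := (a + b) / (2 * a * b) with hk
  have hkpos : 0 < k := by positivity
  set m : ℝ := a * z / (a + b) with hm
  have hptwise : ∀ x : ℝ,
      gaussianPDFReal 0 v₁ x * gaussianPDFReal 0 v₂ (z - x)
        = ((√(2 * π * a))⁻¹ * (√(2 * π * b))⁻¹ * rexp (- z ^ 2 / (2 * (a + b))))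
            * rexp (- k * (x - m) ^ 2) := by
    intro x
    simp only [gaussianPDFReal, sub_zero]
    rw [show ((√(2 * π * a))⁻¹ * rexp (- x ^ 2 / (2 * a))) *
        ((√(2 * π * b))⁻¹ * rexp (- (z - x) ^ 2 / (2 * b)))
        = (√(2 * π * a))⁻¹ * (√(2 * π * b))⁻¹ *
          (rexp (- x ^ 2 / (2 * a)) * rexp (- (z - x) ^ 2 / (2 * b))) by ring,
      ← Real.exp_add]
    have hexp : - x ^ 2 / (2 * a) + - (z - x) ^ 2 / (2 * b)
        = - z ^ 2 / (2 * (a + b)) + - k * (x - m) ^ 2 := by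
      rw [hk, hm]; field_simp; ring
    rw [hexp, Real.exp_add]
    ring
  rw [integral_congr_ae (ae_of_all _ hptwise), integral_const_mul]
  have hshift : ∫ x, rexp (- k * (x - m) ^ 2) = ∫ x, rexp (- k * x ^ 2) :=
    integral_sub_right_eq_self (fun x => rexp (- k * x ^ 2)) m
  rw [hshift, integral_gaussian]
  have hconst := sqrt_const_eq a b ha hb
  have : (v₁ + v₂ : ℝ≥0) = (⟨a + b, le_of_lt hab⟩ : ℝ≥0) := by
    ext; simp [a, b]; rfl
  rw [this]
  simp only [gaussianPDFReal, sub_zero]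
  push_cast
  rw [show (√(2 * π * a))⁻¹ * (√(2 * π * b))⁻¹ * rexp (- z ^ 2 / (2 * (a + b))) * √(π / k)
      = ((√(2 * π * a))⁻¹ * (√(2 * π * b))⁻¹ * √(π / k)) * rexp (- z ^ 2 / (2 * (a + b))) by ring,
    hconst]
  rfl

lemma gaussian_map_add (v₁ v₂ : ℝ≥0) :
    ((gaussianReal 0 v₁).prod (gaussianReal 0 v₂)).map (fun p : ℝ × ℝ => p.1 + p.2)
      = gaussianReal 0 (v₁ + v₂) := by
  by_cases h₁ : v₁ = 0
  · subst h₁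
    rw [gaussianReal_zero_var, Measure.dirac_prod,
      Measure.map_map (by fun_prop) (by fun_prop)]
    have : ((fun p : ℝ × ℝ => p.1 + p.2) ∘ (Prod.mk (0:ℝ))) = fun y : ℝ => (0:ℝ) + y := rfl
    rw [this]
    simpa using gaussianReal_map_const_add (μ := 0) (v := v₂) (0:ℝ)
  by_cases h₂ : v₂ = 0
  · subst h₂
    rw [gaussianReal_zero_var, Measure.prod_dirac,
      Measure.map_map (by fun_prop) (by fun_prop)]
    have : ((fun p : ℝ × ℝ => p.1 + p.2) ∘ (fun x : ℝ => (x, (0:ℝ)))) = fun x : ℝ => x + (0:ℝ) :=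
      rfl
    rw [this]
    simpa using gaussianReal_map_add_const (μ := 0) (v := v₁) (0:ℝ)
  -- main case
  ext s hs
  rw [Measure.map_apply (by fun_prop) hs,
    Measure.prod_apply (hs.preimage (by fun_prop))]
  have step1 : ∀ x : ℝ, gaussianReal 0 v₂ (Prod.mk x ⁻¹' ((fun p : ℝ × ℝ => p.1 + p.2) ⁻¹' s))
      = ∫⁻ y in s, ENNReal.ofReal (gaussianPDFReal 0 v₂ (y - x)) := by
    intro x
    have hpre : (Prod.mk x ⁻¹' ((fun p : ℝ × ℝ => p.1 + p.2) ⁻¹' s))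
        = (fun y : ℝ => x + y) ⁻¹' s := rfl
    rw [hpre, ← Measure.map_apply (by fun_prop) hs, gaussianReal_map_const_add,
      zero_add, gaussianReal_apply _ h₂ s]
    congr 1
    ext y
    rw [gaussianPDFReal_sub, zero_add, gaussianPDF]
  simp_rw [step1]
  have hm : Measurable fun x : ℝ => ∫⁻ y in s, ENNReal.ofReal (gaussianPDFReal 0 v₂ (y - x)) := by
    apply Measurable.lintegral_prod_right'
      (f := fun q : ℝ × ℝ => ENNReal.ofReal (gaussianPDFReal 0 v₂ (q.2 - q.1)))
    exact ((measurable_gaussianPDFReal 0 v₂).comp (measurable_snd.sub measurable_fst)).ennreal_ofReal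
  rw [gaussianReal_of_var_ne_zero _ h₁,
    lintegral_withDensity_eq_lintegral_mul _ (measurable_gaussianPDF 0 v₁) hm]
  simp only [Pi.mul_apply, gaussianPDF]
  have step2 : ∀ x : ℝ, (ENNReal.ofReal (gaussianPDFReal 0 v₁ x)
        * ∫⁻ y in s, ENNReal.ofReal (gaussianPDFReal 0 v₂ (y - x)))
      = ∫⁻ y in s, ENNReal.ofReal (gaussianPDFReal 0 v₁ x * gaussianPDFReal 0 v₂ (y - x)) := by
    intro x
    have hmy : Measurable fun y : ℝ => ENNReal.ofReal (gaussianPDFReal 0 v₂ (y - x)) :=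
      ((measurable_gaussianPDFReal 0 v₂).comp (measurable_sub_const x)).ennreal_ofReal
    rw [← lintegral_const_mul _ hmy]
    congr 1; ext y
    rw [ENNReal.ofReal_mul (gaussianPDFReal_nonneg _ _ _)]
  simp_rw [step2]
  have hm2 : AEMeasurable (fun q : ℝ × ℝ =>
      ENNReal.ofReal (gaussianPDFReal 0 v₁ q.1 * gaussianPDFReal 0 v₂ (q.2 - q.1)))
      ((volume : Measure ℝ).prod ((volume : Measure ℝ).restrict s)) :=
    ((((measurable_gaussianPDFReal 0 v₁).comp measurable_fst).mul
      ((measurable_gaussianPDFReal 0 v₂).comp (measurable_snd.sub measurable_fst))).ennreal_ofReal).aemeasurable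
  rw [lintegral_lintegral_swap hm2]
  have step3 : ∀ y : ℝ, (∫⁻ x, ENNReal.ofReal (gaussianPDFReal 0 v₁ x * gaussianPDFReal 0 v₂ (y - x)))
      = ENNReal.ofReal (gaussianPDFReal 0 (v₁ + v₂) y) := by
    intro y
    have hint : Integrable (fun x => gaussianPDFReal 0 v₁ x * gaussianPDFReal 0 v₂ (y - x)) := by
      have hI : Integrable (fun x => gaussianPDFReal 0 v₂ (y - x)) :=
        (integrable_gaussianPDFReal 0 v₂).comp_sub_left y
      exact hI.bdd_mul (measurable_gaussianPDFReal 0 v₁).aestronglyMeasurable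
        (c := (√(2 * π * v₁))⁻¹) (ae_of_all _ fun x => by
          rw [Real.norm_eq_abs, abs_of_nonneg (gaussianPDFReal_nonneg _ _ _), gaussianPDFReal]
          have h1 : rexp (- (x - 0) ^ 2 / (2 * (v₁:ℝ))) ≤ 1 :=
            Real.exp_le_one_iff.mpr (div_nonpos_of_nonpos_of_nonneg
              (neg_nonpos_of_nonneg (sq_nonneg _)) (by positivity))
          nlinarith [inv_nonneg.mpr (Real.sqrt_nonneg (2 * π * (v₁:ℝ)))])
    rw [← ofReal_integral_eq_lintegral_ofReal hint
      (ae_of_all _ fun x => mul_nonneg (gaussianPDFReal_nonneg _ _ _) (gaussianPDFReal_nonneg _ _ _)),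
      pdf_conv v₁ v₂ h₁ h₂ y]
  simp_rw [step3]
  rw [gaussianReal_apply _ (by simp [h₁]) s]
  rfl

lemma gaussian_pi_map_sum (n : ℕ) (u : Fin n → ℝ) :
    (Measure.pi fun _ : Fin n => gaussianReal 0 1).map (fun x => ∑ i, u i * x i)
      = gaussianReal 0 (∑ i, (⟨(u i) ^ 2, sq_nonneg _⟩ : ℝ≥0)) := by
  induction n with
  | zero =>
      have h0 : (fun x : Fin 0 → ℝ => ∑ i, u i * x i) = fun _ => (0 : ℝ) := by
        ext x; simp
      rw [h0, Measure.map_const]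
      simp [gaussianReal_zero_var]
      erw [Finset.sum_empty, gaussianReal_zero_var]
  | succ n ih =>
      have hmp := measurePreserving_piFinSuccAbove (fun _ : Fin (n + 1) => gaussianReal 0 1) 0
      set e := MeasurableEquiv.piFinSuccAbove (fun _ : Fin (n + 1) => ℝ) 0 with he
      have hmap : (Measure.pi fun _ : Fin (n + 1) => gaussianReal 0 1)
          = ((gaussianReal 0 1).prod (Measure.pi fun _ : Fin n => gaussianReal 0 1)).map e.symm := by
        rw [← hmp.map_eq, MeasurableEquiv.map_symm_map]
      rw [hmap, Measure.map_map (by fun_prop) (MeasurableEquiv.measurable _)]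
      have hgcomp : ((fun x : Fin (n + 1) → ℝ => ∑ i, u i * x i) ∘ e.symm)
          = (fun q : ℝ × ℝ => q.1 + q.2) ∘
            (Prod.map (fun y : ℝ => u 0 * y) (fun w : Fin n → ℝ => ∑ j, u j.succ * w j)) := by
        ext p
        simp only [Function.comp_apply, Prod.map_apply]
        have h0 : e.symm p 0 = p.1 := by simp [he, MeasurableEquiv.piFinSuccAbove]
        have hsucc : ∀ j : Fin n, e.symm p (Fin.succ j) = p.2 j := fun j => by
          simp [he, MeasurableEquiv.piFinSuccAbove, Fin.succAbove]
        rw [Fin.sum_univ_succ, h0]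
        congr 1
      rw [hgcomp, ← Measure.map_map (by fun_prop) (by fun_prop),
        ← Measure.map_prod_map _ _ (by fun_prop) (by fun_prop),
        gaussianReal_map_const_mul, ih]
      simp only [mul_zero]
      rw [gaussian_map_add]
      congr 1
      erw [Fin.sum_univ_succ]
      congr 1
      ext
      simp
      rfl

instance : MeasureTheory.NullSingletonClass (gaussianReal 0 1) :=
  ⟨fun x => (gaussianReal_absolutelyContinuous 0 one_ne_zero) (measure_singleton x)⟩

lemma gaussian_map_neg : (gaussianReal 0 1).map (fun x : ℝ => -x) = gaussianReal 0 1 := by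
  have h := gaussianReal_map_const_mul (μ := 0) (v := 1) (-1)
  have h2 : (fun x : ℝ => (-1 : ℝ) * x) = fun x : ℝ => -x := by ext x; ring
  rw [h2] at h
  rw [h]
  norm_num

lemma gauss_Iic_neg (x : ℝ) : gaussianReal 0 1 (Set.Iic (-x)) = gaussianReal 0 1 (Set.Ici x) := by
  conv_lhs => rw [← gaussian_map_neg]
  rw [Measure.map_apply measurable_neg measurableSet_Iic]
  congr 1
  ext t
  simp

lemma Phi_add_Phi_neg (x : ℝ) : Phi (-x) + Phi x = 1 := by
  have key : gaussianReal 0 1 (Set.Iic (-x)) + gaussianReal 0 1 (Set.Iic x) = 1 := by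
    rw [gauss_Iic_neg]
    rw [← measure_union_add_inter₀ (Set.Ici x) measurableSet_Iic.nullMeasurableSet]
    have h1 : Set.Ici x ∪ Set.Iic x = Set.univ := by
      ext t; simp [le_total x t]
    have h2 : Set.Ici x ∩ Set.Iic x = {x} := by
      ext t; simp [le_antisymm_iff, and_comm, eq_comm]
    rw [h1, h2, measure_singleton, measure_univ, add_zero]
  have hfin1 : gaussianReal 0 1 (Set.Iic (-x)) ≠ ⊤ := measure_ne_top _ _
  have hfin2 : gaussianReal 0 1 (Set.Iic x) ≠ ⊤ := measure_ne_top _ _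
  rw [Phi, Phi, ← ENNReal.toReal_add hfin1 hfin2, key, ENNReal.toReal_one]

lemma Phi_zero : Phi 0 = 1 / 2 := by
  have := Phi_add_Phi_neg 0
  rw [neg_zero] at this
  linarith

lemma monotone_Phi : Monotone Phi := fun a b hab =>
  ENNReal.toReal_mono (measure_ne_top _ _) (measure_mono (Set.Iic_subset_Iic.2 hab))

lemma Phi_eq_integral (x : ℝ) : Phi x = ∫ t in Set.Iic x, gaussianPDFReal 0 1 t := by
  rw [Phi, gaussianReal_apply_eq_integral 0 one_ne_zero,
    ENNReal.toReal_ofReal (setIntegral_nonneg measurableSet_Iic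
      fun t _ => gaussianPDFReal_nonneg 0 1 t)]

lemma continuous_Phi : Continuous Phi := by
  have hint : Integrable (gaussianPDFReal 0 1) := integrable_gaussianPDFReal 0 1
  have hrepr : Phi = fun x => Phi 0 + ∫ t in (0:ℝ)..x, gaussianPDFReal 0 1 t := by
    ext x
    rw [Phi_eq_integral, Phi_eq_integral,
      ← intervalIntegral.integral_Iic_sub_Iic hint.integrableOn hint.integrableOn]
    ring
  rw [hrepr]
  exact continuous_const.add (hint.continuous_primitive 0)

lemma Phi_tendsto : Filter.Tendsto Phi Filter.atTop (nhds 1) := by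
  have h := tendsto_measure_Iic_atTop (gaussianReal 0 1)
  rw [measure_univ] at h
  have := (ENNReal.tendsto_toReal ENNReal.one_ne_top).comp h
  exact this

lemma Phi_PhiInv : Phi (PhiInv (3 / 4)) = 3 / 4 := by
  have hb : ∃ b : ℝ, 3 / 4 ≤ Phi b := by
    have := Phi_tendsto.eventually (eventually_ge_nhds (by norm_num : (3/4 : ℝ) < 1))
    exact (this.exists)
  obtain ⟨b, hb⟩ := hb
  have hb' : 3 / 4 ≤ Phi (max b 0) := le_trans hb (monotone_Phi (le_max_left b 0))
  have hmem : (3 / 4 : ℝ) ∈ Set.Icc (Phi 0) (Phi (max b 0)) := by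
    constructor
    · rw [Phi_zero]; norm_num
    · exact hb'
  have := intermediate_value_Icc (le_max_right b 0) continuous_Phi.continuousOn hmem
  obtain ⟨x, _, hx⟩ := this
  exact Function.invFun_eq ⟨x, hx⟩

lemma PhiInv_pos : 0 < PhiInv (3 / 4) := by
  by_contra h
  push_neg at h
  have := monotone_Phi h
  rw [Phi_PhiInv, Phi_zero] at this
  linarith

lemma measurable_dot {p : ℕ} (u : Fin p → ℝ) :
    Measurable fun x : Fin p → ℝ => u ⬝ᵥ x :=
  Finset.measurable_sum _ fun i _ => (measurable_pi_apply (X := fun _ : Fin p => ℝ) i).const_mul (u i)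

lemma map_dot {p : ℕ} (u : Fin p → ℝ) (hu : u ⬝ᵥ u = 1) :
    (stdGaussianPi p).map (fun x => u ⬝ᵥ x) = gaussianReal 0 1 := by
  have h : (fun x : Fin p → ℝ => u ⬝ᵥ x) = fun x => ∑ i, u i * x i := rfl
  rw [h, stdGaussianPi, gaussian_pi_map_sum]
  congr 1
  ext
  erw [NNReal.coe_sum]
  simp only [NNReal.coe_mk, NNReal.coe_one]
  exact (by simpa [dotProduct, pow_two] using hu : ∑ i, u i ^ 2 = 1)

lemma gauss_set_dot {p : ℕ} (u : Fin p → ℝ) (hu : u ⬝ᵥ u = 1) (S : Set ℝ)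
    (hS : MeasurableSet S) :
    (stdGaussianPi p) {x | u ⬝ᵥ x ∈ S} = (gaussianReal 0 1) S := by
  rw [show {x : Fin p → ℝ | u ⬝ᵥ x ∈ S} = (fun x => u ⬝ᵥ x) ⁻¹' S from rfl,
    ← Measure.map_apply (measurable_dot u) hS, map_dot u hu]

lemma pair_null (a b : ℝ) : gaussianReal 0 1 ({a, b} : Set ℝ) = 0 := by
  refine le_antisymm ?_ zero_le
  calc gaussianReal 0 1 ({a} ∪ {b} : Set ℝ)
      ≤ gaussianReal 0 1 {a} + gaussianReal 0 1 {b} := measure_union_le _ _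
    _ = 0 := by rw [measure_singleton, measure_singleton, add_zero]

lemma gauss_term (c : ℝ) :
    ((gaussianReal 0 1) {t : ℝ | t ^ 2 ≤ c}).toReal
      + ((gaussianReal 0 1) {t : ℝ | c ≤ t ^ 2}).toReal = 1 := by
  have hinter : {t : ℝ | t ^ 2 ≤ c} ∩ {t : ℝ | c ≤ t ^ 2} = {t : ℝ | t ^ 2 = c} := by
    ext t; simp [Set.mem_inter_iff, le_antisymm_iff]
  have hnull : gaussianReal 0 1 {t : ℝ | t ^ 2 = c} = 0 := by
    refine measure_mono_null (fun t ht => ?_) (pair_null (Real.sqrt c) (-Real.sqrt c))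
    have ht' : t ^ 2 = c := ht
    have habs : |t| = Real.sqrt c := by rw [← Real.sqrt_sq_eq_abs, ht']
    rcases (abs_eq (Real.sqrt_nonneg c)).1 habs with h | h
    · exact Or.inl h
    · exact Or.inr h
  have hunion : {t : ℝ | t ^ 2 ≤ c} ∪ {t : ℝ | c ≤ t ^ 2} = Set.univ := by
    ext t; simp [le_total (t ^ 2) c]
  have key := measure_union_add_inter₀ (μ := gaussianReal 0 1) {t : ℝ | t ^ 2 ≤ c}
    ((measurableSet_le measurable_const ((measurable_id.pow_const 2))
      : MeasurableSet {t : ℝ | c ≤ t ^ 2}).nullMeasurableSet)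
  rw [hunion, hinter, hnull, measure_univ, add_zero] at key
  rw [← ENNReal.toReal_add (measure_ne_top _ _) (measure_ne_top _ _), ← key,
    ENNReal.toReal_one]

lemma gauss_half :
    ((gaussianReal 0 1) {t : ℝ | t ^ 2 ≤ (PhiInv (3 / 4)) ^ 2}).toReal = 1 / 2 := by
  set m := PhiInv (3 / 4) with hm
  have hmpos : 0 < m := PhiInv_pos
  have hset : {t : ℝ | t ^ 2 ≤ m ^ 2} = Set.Icc (-m) m := by
    ext t
    simp only [Set.mem_setOf_eq, Set.mem_Icc]
    constructor
    · intro h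
      constructor <;> nlinarith [sq_nonneg (t + m), sq_nonneg (t - m)]
    · rintro ⟨h1, h2⟩
      nlinarith
  rw [hset]
  have key := measure_union_add_inter₀ (μ := gaussianReal 0 1) (t := Set.Icc (-m) m)
    (Set.Iic (-m)) measurableSet_Icc.nullMeasurableSet
  have h1 : Set.Iic (-m) ∪ Set.Icc (-m) m = Set.Iic m := by
    ext t
    simp only [Set.mem_union, Set.mem_Iic, Set.mem_Icc]
    constructor
    · rintro (h | ⟨_, h⟩) <;> linarith
    · intro h
      rcases le_total t (-m) with h' | h'
      · exact Or.inl h'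
      · exact Or.inr ⟨h', h⟩
  have h2 : Set.Iic (-m) ∩ Set.Icc (-m) m = {-m} := by
    ext t
    simp only [Set.mem_inter_iff, Set.mem_Iic, Set.mem_Icc, Set.mem_singleton_iff]
    constructor
    · rintro ⟨h1', h2', _⟩; linarith
    · rintro rfl; exact ⟨le_refl _, le_refl _, by linarith⟩
  rw [h1, h2, measure_singleton, add_zero] at key
  -- key : gaussianReal 0 1 (Iic m) = gaussianReal 0 1 (Iic (-m)) + gaussianReal 0 1 (Icc (-m) m)
  have hto := congrArg ENNReal.toReal key
  rw [ENNReal.toReal_add (measure_ne_top _ _) (measure_ne_top _ _)] at hto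
  have hPm : Phi m = 3 / 4 := Phi_PhiInv
  have hPnm := Phi_add_Phi_neg m
  have hIic : (gaussianReal 0 1 (Set.Iic m)).toReal = Phi m := rfl
  have hIicn : (gaussianReal 0 1 (Set.Iic (-m))).toReal = Phi (-m) := rfl
  rw [hIic, hIicn] at hto
  linarith

/-- Under the standard `p`-variate normal distribution, the deepest scatter matrix is
`[Φ⁻¹(3/4)]² · I_p`, with maximal depth value `1/2`. -/
theorem deepest_scatter_gaussian (p : ℕ) (hp : 0 < p) :
    scatterDepth ((PhiInv (3 / 4)) ^ 2 • (1 : Matrix (Fin p) (Fin p) ℝ))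
        (stdGaussianPi p) = 1 / 2 ∧
      ∀ Γ : Matrix (Fin p) (Fin p) ℝ, Γ.PosDef →
        scatterDepth Γ (stdGaussianPi p) ≤ 1 / 2 := by
  have hmeasA : ∀ c : ℝ, MeasurableSet {t : ℝ | t ^ 2 ≤ c} := fun c =>
    measurableSet_le (measurable_id.pow_const 2) measurable_const
  have hmeasB : ∀ c : ℝ, MeasurableSet {t : ℝ | c ≤ t ^ 2} := fun c =>
    measurableSet_le measurable_const (measurable_id.pow_const 2)
  have hu0 : (Pi.single (⟨0, hp⟩ : Fin p) (1:ℝ)) ⬝ᵥ (Pi.single (⟨0, hp⟩ : Fin p) (1:ℝ)) = 1 := by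
    simp [dotProduct, Pi.single_apply]
  haveI hne : Nonempty {u : Fin p → ℝ // u ⬝ᵥ u = 1} := ⟨⟨_, hu0⟩⟩
  -- each term of the infimum, rewritten through the 1-d gaussian
  have hA : ∀ (u : Fin p → ℝ), u ⬝ᵥ u = 1 → ∀ c : ℝ,
      (stdGaussianPi p) {x | (u ⬝ᵥ x) ^ 2 ≤ c} = (gaussianReal 0 1) {t : ℝ | t ^ 2 ≤ c} :=
    fun u hu c => gauss_set_dot u hu _ (hmeasA c)
  have hB : ∀ (u : Fin p → ℝ), u ⬝ᵥ u = 1 → ∀ c : ℝ,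
      (stdGaussianPi p) {x | c ≤ (u ⬝ᵥ x) ^ 2} = (gaussianReal 0 1) {t : ℝ | c ≤ t ^ 2} :=
    fun u hu c => gauss_set_dot u hu _ (hmeasB c)
  constructor
  · rw [scatterDepth]
    have hval : ∀ u : {u : Fin p → ℝ // u ⬝ᵥ u = 1},
        min ((stdGaussianPi p) {x | (u.1 ⬝ᵥ x) ^ 2 ≤
              u.1 ⬝ᵥ ((PhiInv (3 / 4)) ^ 2 • (1 : Matrix (Fin p) (Fin p) ℝ)).mulVec u.1}).toReal
            ((stdGaussianPi p) {x | u.1 ⬝ᵥ ((PhiInv (3 / 4)) ^ 2 •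
              (1 : Matrix (Fin p) (Fin p) ℝ)).mulVec u.1 ≤ (u.1 ⬝ᵥ x) ^ 2}).toReal
          = 1 / 2 := by
      intro u
      have hc : u.1 ⬝ᵥ ((PhiInv (3 / 4)) ^ 2 •
          (1 : Matrix (Fin p) (Fin p) ℝ)).mulVec u.1 = (PhiInv (3 / 4)) ^ 2 := by
        rw [Matrix.smul_mulVec, Matrix.one_mulVec, dotProduct_smul, u.2,
          smul_eq_mul, mul_one]
      rw [hc, hA u.1 u.2, hB u.1 u.2]
      have h1 : ((gaussianReal 0 1) {t : ℝ | t ^ 2 ≤ (PhiInv (3 / 4)) ^ 2}).toReal = 1 / 2 :=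
        gauss_half
      have h2 := gauss_term ((PhiInv (3 / 4)) ^ 2)
      rw [h1]
      rw [h1] at h2
      rw [show ((gaussianReal 0 1) {t : ℝ | (PhiInv (3 / 4)) ^ 2 ≤ t ^ 2}).toReal = 1 / 2 by
        linarith]
      simp
    exact le_antisymm (hval _ ▸ ciInf_le ⟨0, by
        rintro _ ⟨u, rfl⟩
        exact le_min ENNReal.toReal_nonneg ENNReal.toReal_nonneg⟩ (Classical.arbitrary _))
      (le_ciInf fun u => (hval u).ge)
  · intro Γ _
    rw [scatterDepth]
    refine le_trans (ciInf_le ⟨0, by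
        rintro _ ⟨u, rfl⟩
        exact le_min ENNReal.toReal_nonneg ENNReal.toReal_nonneg⟩
      (⟨_, hu0⟩ : {u : Fin p → ℝ // u ⬝ᵥ u = 1})) ?_
    set u : {u : Fin p → ℝ // u ⬝ᵥ u = 1} := ⟨_, hu0⟩
    set c : ℝ := u.1 ⬝ᵥ Γ.mulVec u.1
    rw [hA u.1 u.2 c, hB u.1 u.2 c]
    have h2 := gauss_term c
    rcases le_total ((gaussianReal 0 1) {t : ℝ | t ^ 2 ≤ c}).toReal
      ((gaussianReal 0 1) {t : ℝ | c ≤ t ^ 2}).toReal with h | h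
    · rw [min_eq_left h]; linarith
    · rw [min_eq_right h]; linarith
end

section
/- Let ε < 1/3, P₀ a distribution with maximal scatter depth D_M(P₀), and P_{ε,Q} = (1-ε)P₀ + εQ. Define Λ(ε,P₀) = inf_Q D_M(P_{ε,Q}) and δ(ε,P₀) = [Λ(ε,P₀) - (1-ε)D_M(P₀)]/(1-ε) ≥ 0. If Γ ∉ L(α, P₀) with α = ε/(1-ε) - δ(ε,P₀), where L(α,P₀) = {Γ ≻ 0 : D(Γ,P₀) ≥ D_M(P₀) - α}, then D(Γ, P_{ε,Q}) < Λ(ε,P₀), so Γ cannot be a deepest scatter matrix under P_{ε,Q}. -/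
open MeasureTheory ProbabilityTheory Matrix

/-- The `ε`-contaminated mixture `(1-ε)·P₀ + ε·Q`. -/
noncomputable def contam {p : ℕ} (ε : ℝ) (P₀ Q : Measure (Fin p → ℝ)) :
    Measure (Fin p → ℝ) :=
  ENNReal.ofReal (1 - ε) • P₀ + ENNReal.ofReal ε • Q

/-- The maximal scatter depth `D_M(P) = sup_Γ D(Γ, P)` over positive definite matrices. -/
noncomputable def maxDepth {p : ℕ} (P : Measure (Fin p → ℝ)) : ℝ :=
  ⨆ Γ : {Γ : Matrix (Fin p) (Fin p) ℝ // Γ.PosDef}, scatterDepth Γ.1 P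

section Helpers

variable {p : ℕ}

lemma unit_nonempty (hp : 0 < p) : Nonempty {u : Fin p → ℝ // u ⬝ᵥ u = 1} := by
  refine ⟨⟨Pi.single ⟨0, hp⟩ 1, ?_⟩⟩
  simp [dotProduct, Pi.single_apply]

lemma toReal_prob_le_one (P : Measure (Fin p → ℝ)) [IsProbabilityMeasure P]
    (A : Set (Fin p → ℝ)) : (P A).toReal ≤ 1 := by
  have h := measure_mono (Set.subset_univ A) (μ := P)
  have := ENNReal.toReal_mono (measure_ne_top P _) h
  simpa using this

lemma contam_toReal (ε : ℝ) (hε0 : 0 ≤ ε) (hε1 : ε ≤ 1)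
    (P₀ Q : Measure (Fin p → ℝ)) [IsProbabilityMeasure P₀] [IsProbabilityMeasure Q]
    (A : Set (Fin p → ℝ)) :
    (contam ε P₀ Q A).toReal = (1 - ε) * (P₀ A).toReal + ε * (Q A).toReal := by
  have h1 : ENNReal.ofReal (1 - ε) * P₀ A ≠ ⊤ :=
    ENNReal.mul_ne_top ENNReal.ofReal_ne_top (measure_ne_top _ _)
  have h2 : ENNReal.ofReal ε * Q A ≠ ⊤ :=
    ENNReal.mul_ne_top ENNReal.ofReal_ne_top (measure_ne_top _ _)
  rw [contam, Measure.add_apply, Measure.smul_apply, Measure.smul_apply,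
    smul_eq_mul, smul_eq_mul, ENNReal.toReal_add h1 h2, ENNReal.toReal_mul,
    ENNReal.toReal_mul, ENNReal.toReal_ofReal (by linarith), ENNReal.toReal_ofReal hε0]

lemma depth_bddBelow (Γ : Matrix (Fin p) (Fin p) ℝ) (P : Measure (Fin p → ℝ)) :
    BddBelow (Set.range fun u : {u : Fin p → ℝ // u ⬝ᵥ u = 1} =>
      min (P {x | (u.1 ⬝ᵥ x) ^ 2 ≤ u.1 ⬝ᵥ Γ.mulVec u.1}).toReal
        (P {x | u.1 ⬝ᵥ Γ.mulVec u.1 ≤ (u.1 ⬝ᵥ x) ^ 2}).toReal) := by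
  refine ⟨0, ?_⟩
  rintro x ⟨u, rfl⟩
  exact le_min ENNReal.toReal_nonneg ENNReal.toReal_nonneg

lemma scatterDepth_nonneg (hp : 0 < p) (Γ : Matrix (Fin p) (Fin p) ℝ)
    (P : Measure (Fin p → ℝ)) : 0 ≤ scatterDepth Γ P := by
  haveI := unit_nonempty hp
  exact le_ciInf fun u => le_min ENNReal.toReal_nonneg ENNReal.toReal_nonneg

lemma scatterDepth_contam_le_one (hp : 0 < p) (ε : ℝ) (hε0 : 0 ≤ ε) (hε1 : ε ≤ 1)
    (Γ : Matrix (Fin p) (Fin p) ℝ) (P₀ Q : Measure (Fin p → ℝ))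
    [IsProbabilityMeasure P₀] [IsProbabilityMeasure Q] :
    scatterDepth Γ (contam ε P₀ Q) ≤ 1 := by
  haveI := unit_nonempty hp
  obtain ⟨u⟩ := unit_nonempty hp
  refine le_trans (ciInf_le (depth_bddBelow Γ _) u) ?_
  refine le_trans (min_le_left _ _) ?_
  rw [contam_toReal ε hε0 hε1]
  have h1 := toReal_prob_le_one P₀ {x | (u.1 ⬝ᵥ x) ^ 2 ≤ u.1 ⬝ᵥ Γ.mulVec u.1}
  have h2 := toReal_prob_le_one Q {x | (u.1 ⬝ᵥ x) ^ 2 ≤ u.1 ⬝ᵥ Γ.mulVec u.1}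
  nlinarith

/-- Lower bound: `(1-ε)·D(Γ,P₀) ≤ D(Γ,P_{ε,Q})`. -/
lemma scatterDepth_contam_lower (hp : 0 < p) (ε : ℝ) (hε0 : 0 ≤ ε) (hε1 : ε ≤ 1)
    (Γ : Matrix (Fin p) (Fin p) ℝ) (P₀ Q : Measure (Fin p → ℝ))
    [IsProbabilityMeasure P₀] [IsProbabilityMeasure Q] :
    (1 - ε) * scatterDepth Γ P₀ ≤ scatterDepth Γ (contam ε P₀ Q) := by
  haveI := unit_nonempty hp
  refine le_ciInf fun u => ?_
  set A₁ := {x : Fin p → ℝ | (u.1 ⬝ᵥ x) ^ 2 ≤ u.1 ⬝ᵥ Γ.mulVec u.1}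
  set A₂ := {x : Fin p → ℝ | u.1 ⬝ᵥ Γ.mulVec u.1 ≤ (u.1 ⬝ᵥ x) ^ 2}
  have hmin : scatterDepth Γ P₀ ≤ min (P₀ A₁).toReal (P₀ A₂).toReal :=
    ciInf_le (depth_bddBelow Γ P₀) u
  rw [contam_toReal ε hε0 hε1, contam_toReal ε hε0 hε1]
  have hq1 : 0 ≤ ε * (Q A₁).toReal := mul_nonneg hε0 ENNReal.toReal_nonneg
  have hq2 : 0 ≤ ε * (Q A₂).toReal := mul_nonneg hε0 ENNReal.toReal_nonneg
  have h1 : min (P₀ A₁).toReal (P₀ A₂).toReal ≤ (P₀ A₁).toReal := min_le_left _ _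
  have h2 : min (P₀ A₁).toReal (P₀ A₂).toReal ≤ (P₀ A₂).toReal := min_le_right _ _
  refine le_min ?_ ?_ <;> nlinarith [mul_le_mul_of_nonneg_left hmin (by linarith : (0:ℝ) ≤ 1 - ε)]

/-- Upper bound at a fixed direction `u`. -/
lemma contam_min_upper (ε : ℝ) (hε0 : 0 ≤ ε) (hε1 : ε ≤ 1)
    (Γ : Matrix (Fin p) (Fin p) ℝ) (P₀ Q : Measure (Fin p → ℝ))
    [IsProbabilityMeasure P₀] [IsProbabilityMeasure Q]
    (u : {u : Fin p → ℝ // u ⬝ᵥ u = 1}) :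
    min (contam ε P₀ Q {x | (u.1 ⬝ᵥ x) ^ 2 ≤ u.1 ⬝ᵥ Γ.mulVec u.1}).toReal
      (contam ε P₀ Q {x | u.1 ⬝ᵥ Γ.mulVec u.1 ≤ (u.1 ⬝ᵥ x) ^ 2}).toReal ≤
    (1 - ε) * min (P₀ {x | (u.1 ⬝ᵥ x) ^ 2 ≤ u.1 ⬝ᵥ Γ.mulVec u.1}).toReal
      (P₀ {x | u.1 ⬝ᵥ Γ.mulVec u.1 ≤ (u.1 ⬝ᵥ x) ^ 2}).toReal + ε := by
  set A₁ := {x : Fin p → ℝ | (u.1 ⬝ᵥ x) ^ 2 ≤ u.1 ⬝ᵥ Γ.mulVec u.1}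
  set A₂ := {x : Fin p → ℝ | u.1 ⬝ᵥ Γ.mulVec u.1 ≤ (u.1 ⬝ᵥ x) ^ 2}
  rw [contam_toReal ε hε0 hε1, contam_toReal ε hε0 hε1]
  have hq1 := toReal_prob_le_one Q A₁
  have hq2 := toReal_prob_le_one Q A₂
  rcases le_total (P₀ A₁).toReal (P₀ A₂).toReal with h | h
  · rw [min_eq_left h]
    refine le_trans (min_le_left _ _) ?_
    nlinarith
  · rw [min_eq_right h]
    refine le_trans (min_le_right _ _) ?_
    nlinarith

lemma maxDepth_contam_lower (hp : 0 < p) (ε : ℝ) (hε0 : 0 ≤ ε) (hε1 : ε < 1)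
    (P₀ Q : Measure (Fin p → ℝ)) [IsProbabilityMeasure P₀] [IsProbabilityMeasure Q] :
    (1 - ε) * maxDepth P₀ ≤ maxDepth (contam ε P₀ Q) := by
  have hpos : (0:ℝ) < 1 - ε := by linarith
  have hbdd : BddAbove (Set.range fun Γ : {Γ : Matrix (Fin p) (Fin p) ℝ // Γ.PosDef} =>
      scatterDepth Γ.1 (contam ε P₀ Q)) := by
    refine ⟨1, ?_⟩
    rintro x ⟨Γ, rfl⟩
    exact scatterDepth_contam_le_one hp ε hε0 hε1.le Γ.1 P₀ Q
  have hc0 : 0 ≤ maxDepth (contam ε P₀ Q) := by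
    refine le_trans (scatterDepth_nonneg hp 1 (contam ε P₀ Q)) ?_
    exact le_ciSup hbdd ⟨1, Matrix.PosDef.one⟩
  have hle : maxDepth P₀ ≤ maxDepth (contam ε P₀ Q) / (1 - ε) := by
    refine Real.iSup_le (fun Γ => ?_) (div_nonneg hc0 hpos.le)
    rw [le_div_iff₀ hpos, mul_comm]
    refine le_trans (scatterDepth_contam_lower hp ε hε0 hε1.le Γ.1 P₀ Q) ?_
    exact le_ciSup hbdd Γ
  calc (1 - ε) * maxDepth P₀ ≤ (1 - ε) * (maxDepth (contam ε P₀ Q) / (1 - ε)) :=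
        mul_le_mul_of_nonneg_left hle hpos.le
    _ = maxDepth (contam ε P₀ Q) := by field_simp

end Helpers

/-- For `ε < 1/3`, with `Λ(ε,P₀) = inf_Q D_M(P_{ε,Q})` and
`δ(ε,P₀) = [Λ(ε,P₀) - (1-ε)D_M(P₀)]/(1-ε) ≥ 0`, any positive definite `Γ` outside the
depth region `L(α, P₀)` with `α = ε/(1-ε) - δ(ε,P₀)` satisfies
`D(Γ, P_{ε,Q}) < Λ(ε,P₀)` for every `Q`, hence cannot be a deepest scatter matrix. -/
theorem outside_depth_region_not_deepest (p : ℕ) (hp : 0 < p)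
    (P₀ : Measure (Fin p → ℝ)) [IsProbabilityMeasure P₀]
    (ε : ℝ) (hε0 : 0 ≤ ε) (hε : ε < 1 / 3)
    (Λ δ α : ℝ)
    (hΛ : Λ = ⨅ Q : {Q : Measure (Fin p → ℝ) // IsProbabilityMeasure Q},
      maxDepth (contam ε P₀ Q.1))
    (hδ : δ = (Λ - (1 - ε) * maxDepth P₀) / (1 - ε))
    (hα : α = ε / (1 - ε) - δ) :
    0 ≤ δ ∧
      ∀ Γ : Matrix (Fin p) (Fin p) ℝ, Γ.PosDef →
        scatterDepth Γ P₀ < maxDepth P₀ - α →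
        ∀ Q : Measure (Fin p → ℝ), IsProbabilityMeasure Q →
          scatterDepth Γ (contam ε P₀ Q) < Λ := by
  have hε1 : ε < 1 := by linarith
  have hpos : (0:ℝ) < 1 - ε := by linarith
  haveI : Nonempty {Q : Measure (Fin p → ℝ) // IsProbabilityMeasure Q} :=
    ⟨⟨Measure.dirac 0, inferInstance⟩⟩
  -- Λ ≥ (1-ε)·D_M(P₀)
  have hΛge : (1 - ε) * maxDepth P₀ ≤ Λ := by
    rw [hΛ]
    refine le_ciInf fun Q => ?_
    haveI := Q.2
    exact maxDepth_contam_lower hp ε hε0 hε1 P₀ Q.1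
  have hδ0 : 0 ≤ δ := by
    rw [hδ]
    exact div_nonneg (by linarith) hpos.le
  refine ⟨hδ0, fun Γ hΓ hout Q hQ => ?_⟩
  haveI := hQ
  haveI := unit_nonempty hp
  -- pick a witness direction
  obtain ⟨u, hu⟩ := exists_lt_of_ciInf_lt hout
  have h1 : scatterDepth Γ (contam ε P₀ Q) ≤
      min (contam ε P₀ Q {x | (u.1 ⬝ᵥ x) ^ 2 ≤ u.1 ⬝ᵥ Γ.mulVec u.1}).toReal
        (contam ε P₀ Q {x | u.1 ⬝ᵥ Γ.mulVec u.1 ≤ (u.1 ⬝ᵥ x) ^ 2}).toReal :=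
    ciInf_le (depth_bddBelow Γ _) u
  have h2 := contam_min_upper ε hε0 hε1.le Γ P₀ Q u
  -- arithmetic: (1-ε)(D_M - α) + ε = Λ
  have hδ' : δ * (1 - ε) = Λ - (1 - ε) * maxDepth P₀ := by
    rw [hδ]; field_simp
  have hα' : α * (1 - ε) = ε - δ * (1 - ε) := by
    rw [hα]; field_simp
  have h3 : (1 - ε) * (maxDepth P₀ - α) + ε = Λ := by nlinarith
  have h4 : (1 - ε) * min (P₀ {x | (u.1 ⬝ᵥ x) ^ 2 ≤ u.1 ⬝ᵥ Γ.mulVec u.1}).toReal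
      (P₀ {x | u.1 ⬝ᵥ Γ.mulVec u.1 ≤ (u.1 ⬝ᵥ x) ^ 2}).toReal + ε < Λ := by
    rw [← h3]
    have := mul_lt_mul_of_pos_left hu hpos
    linarith
  linarith
end
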